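/- (Existence of optimal gain-scaling L*.) Fix d ∈ (−1,1), β > 0 and α₁, α₂, ã > 0, and suppose that ã·(α₁·μ(z₁,z₂) − (α₂/α₁)·η(z₁,z₂)) > α₁²·z₂² for every (z₁,z₂) ∈ ℝ²∖{(0,0)}. For L > 0 define G(L) := inf {γ ∈ ℝ : γ > 0 and Ĵ(z₁,z₂,ν,δ; γ, L) < 0 for all (z₁,z₂,ν,δ) ∈ ℝ⁴∖{(0,0,0,0)}}. Then there exists an optimal gain-scaling L* > 0 that globally minimizes G, i.e. G(L*) ≤ G(L) for all L > 0. -/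

import Mathlib

/-- Sign-preserving power `⌊x⌉^p = sign(x)·|x|^p`. -/
noncomputable def spow (x p : ℝ) : ℝ := Real.sign x * |x| ^ p

/-- The value function `Ĵ(z₁,z₂,ν,δ; γ, L)` of the homogeneous differential
dissipation inequality for the second-order homogeneous differentiator. -/
noncomputable def Jhat (d β α1 α2 a L γ z1 z2 ν δ : ℝ) : ℝ :=
  a * (-α1 * (spow z1 (1/(1-d)) - z2) * (spow (z1 + ν) (1/(1-d)) - z2)
        + (-z1 + (1 + β) * spow z2 (1 - d)) *
            (-(α2 / α1) * spow (z1 + ν) ((1+d)/(1-d)) + δ / (L ^ 2 * α1)))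
    + α1 ^ 2 * z2 ^ 2 - (γ / L) ^ 2 * (|ν| ^ (2/(1-d)) + |δ| ^ (2/(1+d)))

/-- `μ(z)` of the Lyapunov derivative. -/
noncomputable def muF (d z1 z2 : ℝ) : ℝ := |spow z1 (1/(1-d)) - z2| ^ (2:ℝ)

/-- `η(z)` of the Lyapunov derivative. -/
noncomputable def etaF (d β z1 z2 : ℝ) : ℝ :=
  (1 + β) * (z1 - spow z2 (1 - d)) * spow z1 ((1+d)/(1-d)) - β * |z1| ^ (2/(1-d))

/-- `G(L)`: the infimum of certified gains for gain-scaling `L`. -/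
noncomputable def Gest (d β α1 α2 a L : ℝ) : ℝ :=
  sInf {γ : ℝ | 0 < γ ∧ ∀ z1 z2 ν δ : ℝ,
    (z1, z2, ν, δ) ≠ ((0:ℝ), (0:ℝ), (0:ℝ), (0:ℝ)) →
    Jhat d β α1 α2 a L γ z1 z2 ν δ < 0}


-- ### Auxiliary development ###

lemma spow_zero (p : ℝ) : spow 0 p = 0 := by simp [spow, Real.sign_zero]

lemma spow_one_base (p : ℝ) : spow 1 p = 1 := by
  simp [spow, Real.sign_one]

lemma spow_neg_one (p : ℝ) : spow (-1) p = -1 := by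
  simp [spow, Real.sign_of_neg (by norm_num : (-1:ℝ) < 0)]

lemma spow_of_pos {x : ℝ} (hx : 0 < x) (p : ℝ) : spow x p = x ^ p := by
  simp [spow, Real.sign_of_pos hx, abs_of_pos hx]

lemma spow_const_mul {c : ℝ} (hc : 0 < c) (x p : ℝ) :
    spow (c * x) p = c ^ p * spow x p := by
  rcases eq_or_ne x 0 with rfl | hx
  · simp [spow_zero]
  · rcases lt_or_gt_of_ne hx with h | h
    · have h1 : c * x < 0 := mul_neg_of_pos_of_neg hc h
      simp only [spow, Real.sign_of_neg h1, Real.sign_of_neg h]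
      rw [abs_mul, abs_of_pos hc, Real.mul_rpow hc.le (abs_nonneg x)]
      ring
    · have h1 : 0 < c * x := mul_pos hc h
      simp only [spow, Real.sign_of_pos h1, Real.sign_of_pos h]
      rw [abs_mul, abs_of_pos hc, Real.mul_rpow hc.le (abs_nonneg x)]
      ring

lemma abs_const_mul_rpow {c : ℝ} (hc : 0 < c) (x p : ℝ) :
    |c * x| ^ p = c ^ p * |x| ^ p := by
  rw [abs_mul, abs_of_pos hc, Real.mul_rpow hc.le (abs_nonneg x)]

lemma mul_spow_self {d : ℝ} (hd : d ∈ Set.Ioo (-1:ℝ) 1) (x : ℝ) :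
    x * spow x ((1+d)/(1-d)) = |x| ^ (2/(1-d)) := by
  have h1d : (0:ℝ) < 1 - d := by linarith [hd.2]
  rcases eq_or_ne x 0 with rfl | hx
  · rw [spow_zero, mul_zero, abs_zero, Real.zero_rpow (by positivity)]
  · have hax : 0 < |x| := abs_pos.mpr hx
    have hsx : x * Real.sign x = |x| := by
      rcases lt_or_gt_of_ne hx with h | h
      · rw [Real.sign_of_neg h, abs_of_neg h]; ring
      · rw [Real.sign_of_pos h, abs_of_pos h]; ring
    have h2 : x * spow x ((1+d)/(1-d)) = |x| ^ (1 + (1+d)/(1-d)) := by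
      rw [spow, ← mul_assoc, hsx, Real.rpow_add hax, Real.rpow_one]
    rw [h2]
    congr 1
    field_simp
    ring

lemma continuous_spow {p : ℝ} (hp : 0 < p) : Continuous fun x : ℝ => spow x p := by
  rw [continuous_iff_continuousAt]
  intro x
  rcases lt_trichotomy x 0 with h | rfl | h
  · have hev : ∀ᶠ y in nhds x, spow y p = -(|y| ^ p) := by
      filter_upwards [eventually_lt_nhds h] with y hy
      rw [spow, Real.sign_of_neg hy]; ring
    refine ContinuousAt.congr ?_ (hev.mono fun y hy => hy.symm)
    exact ((Real.continuousAt_rpow_const _ _ (Or.inr hp.le)).comp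
      continuous_abs.continuousAt).neg
  · have hg : ContinuousAt (fun y : ℝ => |y| ^ p) 0 :=
      (Real.continuousAt_rpow_const _ _ (Or.inr hp.le)).comp continuous_abs.continuousAt
    have hg0 : Filter.Tendsto (fun y : ℝ => |y| ^ p) (nhds 0) (nhds 0) := by
      simpa [abs_zero, Real.zero_rpow hp.ne'] using hg.tendsto
    have key : Filter.Tendsto (fun y : ℝ => spow y p) (nhds 0) (nhds 0) := by
      refine squeeze_zero_norm (fun y => ?_) hg0
      have h1 : |Real.sign y| ≤ 1 := by
        rcases lt_trichotomy y 0 with h | rfl | h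
        · rw [Real.sign_of_neg h]; norm_num
        · rw [Real.sign_zero]; norm_num
        · rw [Real.sign_of_pos h]; norm_num
      have h2 : (0:ℝ) ≤ |y| ^ p := Real.rpow_nonneg (abs_nonneg y) p
      rw [spow, Real.norm_eq_abs, abs_mul, abs_of_nonneg h2]
      nlinarith [abs_nonneg (Real.sign y)]
    simpa [ContinuousAt, spow_zero] using key
  · have hev : ∀ᶠ y in nhds x, spow y p = |y| ^ p := by
      filter_upwards [eventually_gt_nhds h] with y hy
      rw [spow, Real.sign_of_pos hy, one_mul]
    refine ContinuousAt.congr ?_ (hev.mono fun y hy => hy.symm)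
    exact (Real.continuousAt_rpow_const _ _ (Or.inr hp.le)).comp continuous_abs.continuousAt

lemma continuous_abs_rpow {p : ℝ} (hp : 0 < p) : Continuous fun x : ℝ => |x| ^ p := by
  rw [continuous_iff_continuousAt]
  intro x
  exact (Real.continuousAt_rpow_const _ _ (Or.inr hp.le)).comp continuous_abs.continuousAt

/-- The `γ`-independent, `L`-independent part of `L² Ĵ`. -/
noncomputable def K0fn (d β α1 α2 a : ℝ) (s : ℝ × ℝ × ℝ × ℝ) : ℝ :=
  a * (-α1 * (spow s.1 (1/(1-d)) - s.2.1) * (spow (s.1 + s.2.2.1) (1/(1-d)) - s.2.1)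
    + (-s.1 + (1+β) * spow s.2.1 (1-d)) * (-(α2/α1) * spow (s.1 + s.2.2.1) ((1+d)/(1-d))))
  + α1^2 * s.2.1^2

/-- The coefficient of `1` (after multiplying by `L²`) coming from the `δ` term. -/
noncomputable def Dfn (d β α1 a : ℝ) (s : ℝ × ℝ × ℝ × ℝ) : ℝ :=
  a * (-s.1 + (1+β) * spow s.2.1 (1-d)) * s.2.2.2 / α1

/-- The homogeneous penalty norm. -/
noncomputable def Nfn (d : ℝ) (s : ℝ × ℝ × ℝ × ℝ) : ℝ :=
  |s.2.2.1| ^ (2/(1-d)) + |s.2.2.2| ^ (2/(1+d))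

/-- A homogeneous "norm" used to define the homogeneous unit sphere. -/
noncomputable def rhoF (d : ℝ) (s : ℝ × ℝ × ℝ × ℝ) : ℝ :=
  |s.1| ^ (2/(1-d)) + s.2.1^2 + Nfn d s

/-- Weighted dilation. -/
noncomputable def dil (d c : ℝ) (s : ℝ × ℝ × ℝ × ℝ) : ℝ × ℝ × ℝ × ℝ :=
  (c^(1-d) * s.1, c * s.2.1, c^(1-d) * s.2.2.1, c^(1+d) * s.2.2.2)

section hom
variable {d : ℝ} (hd : d ∈ Set.Ioo (-1:ℝ) 1) {c : ℝ} (hc : 0 < c)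

include hd hc

lemma rpow_hom1 : (c^(1-d) : ℝ) ^ (1/(1-d)) = c := by
  have h1 : (1:ℝ) - d ≠ 0 := ne_of_gt (by linarith [hd.2])
  rw [← Real.rpow_mul hc.le]
  rw [show (1-d) * (1/(1-d)) = 1 by field_simp, Real.rpow_one]

lemma rpow_hom2 : (c^(1-d) : ℝ) ^ ((1+d)/(1-d)) = c ^ (1+d) := by
  have h1 : (1:ℝ) - d ≠ 0 := ne_of_gt (by linarith [hd.2])
  rw [← Real.rpow_mul hc.le]
  congr 1
  field_simp

lemma rpow_hom3 : (c^(1-d) : ℝ) ^ (2/(1-d)) = c ^ 2 := by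
  have h1 : (1:ℝ) - d ≠ 0 := ne_of_gt (by linarith [hd.2])
  rw [← Real.rpow_mul hc.le, show (1-d) * (2/(1-d)) = 2 by field_simp,
    ← Real.rpow_natCast c 2]
  norm_num

lemma rpow_hom4 : (c^(1+d) : ℝ) ^ (2/(1+d)) = c ^ 2 := by
  have h1 : (1:ℝ) + d ≠ 0 := ne_of_gt (by linarith [hd.1])
  rw [← Real.rpow_mul hc.le, show (1+d) * (2/(1+d)) = 2 by
      field_simp, ← Real.rpow_natCast c 2]
  norm_num

omit hd in
lemma rpow_hom5 : (c^(1-d) : ℝ) * c^(1+d) = c ^ 2 := by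
  rw [← Real.rpow_add hc, show (1-d) + (1+d) = 2 by ring, ← Real.rpow_natCast c 2]
  norm_num

lemma hom_K0 (β α1 α2 a : ℝ) (s : ℝ × ℝ × ℝ × ℝ) :
    K0fn d β α1 α2 a (dil d c s) = c^2 * K0fn d β α1 α2 a s := by
  obtain ⟨z1, z2, ν, δ⟩ := s
  have hc1 : (0:ℝ) < c^(1-d) := Real.rpow_pos_of_pos hc _
  simp only [K0fn, dil, ← mul_add c, ← mul_add (c^(1-d))]
  rw [spow_const_mul hc1, spow_const_mul hc1, spow_const_mul hc1, spow_const_mul hc,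
    rpow_hom1 hd hc, rpow_hom2 hd hc]
  have h5 := rpow_hom5 (d := d) hc
  linear_combination (a * (-z1 + (1+β) * spow z2 (1-d)) * (-(α2/α1) * spow (z1+ν) ((1+d)/(1-d)))) * h5

lemma hom_D (β α1 a : ℝ) (s : ℝ × ℝ × ℝ × ℝ) :
    Dfn d β α1 a (dil d c s) = c^2 * Dfn d β α1 a s := by
  obtain ⟨z1, z2, ν, δ⟩ := s
  simp only [Dfn, dil]
  rw [spow_const_mul hc]
  have h5 := rpow_hom5 (d := d) hc
  linear_combination (a * (-z1 + (1+β) * spow z2 (1-d)) * δ / α1) * h5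

lemma hom_N (s : ℝ × ℝ × ℝ × ℝ) : Nfn d (dil d c s) = c^2 * Nfn d s := by
  obtain ⟨z1, z2, ν, δ⟩ := s
  have hc1 : (0:ℝ) < c^(1-d) := Real.rpow_pos_of_pos hc _
  have hc2 : (0:ℝ) < c^(1+d) := Real.rpow_pos_of_pos hc _
  simp only [Nfn, dil]
  rw [abs_const_mul_rpow hc1, abs_const_mul_rpow hc2, rpow_hom3 hd hc, rpow_hom4 hd hc]
  ring

lemma hom_rho (s : ℝ × ℝ × ℝ × ℝ) : rhoF d (dil d c s) = c^2 * rhoF d s := by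
  have hN := hom_N hd hc s
  obtain ⟨z1, z2, ν, δ⟩ := s
  have hc1 : (0:ℝ) < c^(1-d) := Real.rpow_pos_of_pos hc _
  simp only [rhoF, dil] at hN ⊢
  rw [abs_const_mul_rpow hc1, rpow_hom3 hd hc, hN]
  ring

end hom

section basic
variable {d : ℝ} (hd : d ∈ Set.Ioo (-1:ℝ) 1)
include hd

lemma hd_pos1 : (0:ℝ) < 1 - d := by linarith [hd.2]
lemma hd_pos2 : (0:ℝ) < 1 + d := by linarith [hd.1]

lemma cont_proj1 : Continuous fun s : ℝ × ℝ × ℝ × ℝ => s.1 := continuous_fst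
omit hd in
lemma cont_z2 : Continuous fun s : ℝ × ℝ × ℝ × ℝ => s.2.1 := continuous_fst.comp continuous_snd
omit hd in
lemma cont_nu : Continuous fun s : ℝ × ℝ × ℝ × ℝ => s.2.2.1 :=
  continuous_fst.comp (continuous_snd.comp continuous_snd)
omit hd in
lemma cont_de : Continuous fun s : ℝ × ℝ × ℝ × ℝ => s.2.2.2 :=
  continuous_snd.comp (continuous_snd.comp continuous_snd)

lemma cont_K0 (β α1 α2 a : ℝ) : Continuous (K0fn d β α1 α2 a) := by
  have hp : (0:ℝ) < 1/(1-d) := by have := hd_pos1 hd; positivity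
  have hq : (0:ℝ) < (1+d)/(1-d) := div_pos (hd_pos2 hd) (hd_pos1 hd)
  have h1 : Continuous fun s : ℝ × ℝ × ℝ × ℝ => spow s.1 (1/(1-d)) :=
    (continuous_spow hp).comp continuous_fst
  have h2 : Continuous fun s : ℝ × ℝ × ℝ × ℝ => spow (s.1 + s.2.2.1) (1/(1-d)) :=
    (continuous_spow hp).comp (continuous_fst.add cont_nu)
  have h3 : Continuous fun s : ℝ × ℝ × ℝ × ℝ => spow s.2.1 (1-d) :=
    (continuous_spow (hd_pos1 hd)).comp cont_z2
  have h4 : Continuous fun s : ℝ × ℝ × ℝ × ℝ => spow (s.1 + s.2.2.1) ((1+d)/(1-d)) :=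
    (continuous_spow hq).comp (continuous_fst.add cont_nu)
  unfold K0fn
  fun_prop

lemma cont_D (β α1 a : ℝ) : Continuous (Dfn d β α1 a) := by
  have h3 : Continuous fun s : ℝ × ℝ × ℝ × ℝ => spow s.2.1 (1-d) :=
    (continuous_spow (hd_pos1 hd)).comp cont_z2
  unfold Dfn
  fun_prop

lemma cont_N : Continuous (Nfn d) := by
  have hp : (0:ℝ) < 2/(1-d) := by have := hd_pos1 hd; positivity
  have hq : (0:ℝ) < 2/(1+d) := by have := hd_pos2 hd; positivity
  exact ((continuous_abs_rpow hp).comp cont_nu).add ((continuous_abs_rpow hq).comp cont_de)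

lemma cont_rho : Continuous (rhoF d) := by
  have hp : (0:ℝ) < 2/(1-d) := by have := hd_pos1 hd; positivity
  exact (((continuous_abs_rpow hp).comp continuous_fst).add
    ((cont_z2.pow 2))).add (cont_N hd)

lemma rho_pos {s : ℝ × ℝ × ℝ × ℝ} (hs : s ≠ 0) : 0 < rhoF d s := by
  have hp : (0:ℝ) < 2/(1-d) := by have := hd_pos1 hd; positivity
  have hq : (0:ℝ) < 2/(1+d) := by have := hd_pos2 hd; positivity
  obtain ⟨z1, z2, ν, δ⟩ := s
  have h0 : ¬(z1 = 0 ∧ z2 = 0 ∧ ν = 0 ∧ δ = 0) := by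
    intro ⟨a, b, c, e⟩; exact hs (by simp [a, b, c, e, Prod.ext_iff])
  have t1 : (0:ℝ) ≤ |z1| ^ (2/(1-d)) := Real.rpow_nonneg (abs_nonneg _) _
  have t2 : (0:ℝ) ≤ z2^2 := sq_nonneg _
  have t3 : (0:ℝ) ≤ |ν| ^ (2/(1-d)) := Real.rpow_nonneg (abs_nonneg _) _
  have t4 : (0:ℝ) ≤ |δ| ^ (2/(1+d)) := Real.rpow_nonneg (abs_nonneg _) _
  simp only [rhoF, Nfn]
  rcases not_and_or.mp h0 with h | h'
  · have : (0:ℝ) < |z1| ^ (2/(1-d)) := Real.rpow_pos_of_pos (abs_pos.mpr h) _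
    linarith
  rcases not_and_or.mp h' with h | h'
  · have : (0:ℝ) < z2^2 := by positivity
    linarith
  rcases not_and_or.mp h' with h | h
  · have : (0:ℝ) < |ν| ^ (2/(1-d)) := Real.rpow_pos_of_pos (abs_pos.mpr h) _
    linarith
  · have : (0:ℝ) < |δ| ^ (2/(1+d)) := Real.rpow_pos_of_pos (abs_pos.mpr h) _
    linarith

lemma N_eq_zero {s : ℝ × ℝ × ℝ × ℝ} (hN : Nfn d s = 0) : s.2.2.1 = 0 ∧ s.2.2.2 = 0 := by
  have hp : (0:ℝ) < 2/(1-d) := by have := hd_pos1 hd; positivity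
  have hq : (0:ℝ) < 2/(1+d) := by have := hd_pos2 hd; positivity
  have t3 : (0:ℝ) ≤ |s.2.2.1| ^ (2/(1-d)) := Real.rpow_nonneg (abs_nonneg _) _
  have t4 : (0:ℝ) ≤ |s.2.2.2| ^ (2/(1+d)) := Real.rpow_nonneg (abs_nonneg _) _
  simp only [Nfn] at hN
  constructor
  · by_contra h
    have : (0:ℝ) < |s.2.2.1| ^ (2/(1-d)) := Real.rpow_pos_of_pos (abs_pos.mpr h) _
    linarith
  · by_contra h
    have : (0:ℝ) < |s.2.2.2| ^ (2/(1+d)) := Real.rpow_pos_of_pos (abs_pos.mpr h) _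
    linarith

omit hd in
lemma N_nonneg (s : ℝ × ℝ × ℝ × ℝ) : 0 ≤ Nfn d s := by
  have t3 : (0:ℝ) ≤ |s.2.2.1| ^ (2/(1-d)) := Real.rpow_nonneg (abs_nonneg _) _
  have t4 : (0:ℝ) ≤ |s.2.2.2| ^ (2/(1+d)) := Real.rpow_nonneg (abs_nonneg _) _
  simp only [Nfn]; linarith

/-- On the diagonal `ν = δ = 0`, `K0fn` is exactly the strict-feasibility expression. -/
lemma K0_diag (β α1 α2 a : ℝ) (hα1 : α1 ≠ 0) (z1 z2 : ℝ) :
    K0fn d β α1 α2 a (z1, z2, 0, 0)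
      = α1^2 * z2^2 - a * (α1 * muF d z1 z2 - (α2/α1) * etaF d β z1 z2) := by
  have h6 := mul_spow_self hd z1
  have hmu : muF d z1 z2 = (spow z1 (1/(1-d)) - z2)^2 := by
    rw [muF, show (2:ℝ) = ((2:ℕ):ℝ) by norm_num, Real.rpow_natCast, sq_abs]
  simp only [K0fn, etaF, add_zero]
  rw [hmu]
  linear_combination (-(a * (α2/α1) * β)) * h6
end basic

/-- The feasible-gain set for the reduced (L-scaled-out) problem. -/
def Wset (d β α1 α2 a u : ℝ) : Set ℝ :=
  {v | 0 < v ∧ ∀ s : ℝ × ℝ × ℝ × ℝ, s ≠ 0 →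
    u * K0fn d β α1 α2 a s + Dfn d β α1 a s < v * Nfn d s}

lemma Wset_nonempty {d β α1 α2 a : ℝ} (hd : d ∈ Set.Ioo (-1:ℝ) 1) (hβ : 0 < β)
    (hα1 : 0 < α1) (hα2 : 0 < α2) (ha : 0 < a)
    (hSF : ∀ z1 z2 : ℝ, (z1, z2) ≠ ((0:ℝ), (0:ℝ)) →
      α1 ^ 2 * z2 ^ 2 < a * (α1 * muF d z1 z2 - (α2 / α1) * etaF d β z1 z2))
    {u : ℝ} (hu : 0 < u) : (Wset d β α1 α2 a u).Nonempty := by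
  classical
  set f : ℝ × ℝ × ℝ × ℝ → ℝ := fun s => u * K0fn d β α1 α2 a s + Dfn d β α1 a s with hf
  have hfc : Continuous f := (continuous_const.mul (cont_K0 hd β α1 α2 a)).add (cont_D hd β α1 a)
  have hdiag : ∀ z1 z2 : ℝ, (z1, z2) ≠ ((0:ℝ), (0:ℝ)) → f (z1, z2, 0, 0) < 0 := by
    intro z1 z2 hz
    have h1 : K0fn d β α1 α2 a (z1, z2, 0, 0) < 0 := by
      rw [K0_diag hd β α1 α2 a hα1.ne' z1 z2]
      have := hSF z1 z2 hz
      linarith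
    have h2 : Dfn d β α1 a (z1, z2, 0, 0) = 0 := by simp [Dfn]
    have h3 : u * K0fn d β α1 α2 a (z1, z2, 0, 0) < 0 := mul_neg_of_pos_of_neg hu h1
    simp only [hf]
    linarith
  clear_value f
  set Sph : Set (ℝ × ℝ × ℝ × ℝ) := {s | rhoF d s = 1} with hSphdef
  have hSphClosed : IsClosed Sph := isClosed_eq (cont_rho hd) continuous_const
  have hp : (0:ℝ) < 2/(1-d) := by have := hd_pos1 hd; positivity
  have hq : (0:ℝ) < 2/(1+d) := by have := hd_pos2 hd; positivity
  have hbox : Sph ⊆ (Set.Icc (-1:ℝ) 1) ×ˢ ((Set.Icc (-1:ℝ) 1) ×ˢ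
      ((Set.Icc (-1:ℝ) 1) ×ˢ (Set.Icc (-1:ℝ) 1))) := by
    rintro ⟨z1, z2, ν, δ⟩ hs
    simp only [hSphdef, Set.mem_setOf_eq, rhoF, Nfn] at hs
    have t1 : (0:ℝ) ≤ |z1| ^ (2/(1-d)) := Real.rpow_nonneg (abs_nonneg _) _
    have t2 : (0:ℝ) ≤ z2^2 := sq_nonneg _
    have t3 : (0:ℝ) ≤ |ν| ^ (2/(1-d)) := Real.rpow_nonneg (abs_nonneg _) _
    have t4 : (0:ℝ) ≤ |δ| ^ (2/(1+d)) := Real.rpow_nonneg (abs_nonneg _) _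
    have b1 : |z1| ≤ 1 := by
      by_contra h; push_neg at h
      have : (1:ℝ) < |z1| ^ (2/(1-d)) :=
        (Real.one_lt_rpow_iff_of_pos (by linarith)).mpr (Or.inl ⟨h, hp⟩)
      linarith
    have b3 : |ν| ≤ 1 := by
      by_contra h; push_neg at h
      have : (1:ℝ) < |ν| ^ (2/(1-d)) :=
        (Real.one_lt_rpow_iff_of_pos (by linarith)).mpr (Or.inl ⟨h, hp⟩)
      linarith
    have b4 : |δ| ≤ 1 := by
      by_contra h; push_neg at h
      have : (1:ℝ) < |δ| ^ (2/(1+d)) :=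
        (Real.one_lt_rpow_iff_of_pos (by linarith)).mpr (Or.inl ⟨h, hq⟩)
      linarith
    have b2 : |z2| ≤ 1 := by
      rw [← abs_one]
      exact abs_le_abs (by nlinarith [abs_nonneg z2, le_abs_self z2]) (by nlinarith [abs_nonneg z2, neg_abs_le z2])
    refine ⟨abs_le.mp b1, abs_le.mp b2, abs_le.mp b3, abs_le.mp b4⟩
  have hSphCompact : IsCompact Sph :=
    IsCompact.of_isClosed_subset
      (isCompact_Icc.prod (isCompact_Icc.prod (isCompact_Icc.prod isCompact_Icc)))
      hSphClosed hbox
  -- a gain valid on the sphere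
  have hsph : ∃ v : ℝ, 0 < v ∧ ∀ s ∈ Sph, f s < v * Nfn d s := by
    by_cases hT : (Sph ∩ {s | 0 ≤ f s}).Nonempty
    · have hTc : IsCompact (Sph ∩ {s | 0 ≤ f s}) :=
        hSphCompact.inter_right (isClosed_le continuous_const hfc)
      obtain ⟨sm, hsm, hminN⟩ := hTc.exists_isMinOn hT ((cont_N hd).continuousOn)
      obtain ⟨sM, hsM, hmaxf⟩ := hTc.exists_isMaxOn hT hfc.continuousOn
      have hm : 0 < Nfn d sm := by
        rcases (N_nonneg (d := d) sm).lt_or_eq with h | h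
        · exact h
        · exfalso
          obtain ⟨hν, hδ⟩ := N_eq_zero hd h.symm
          obtain ⟨z1, z2, ν, δ⟩ := sm
          simp only at hν hδ
          subst hν hδ
          have hz : (z1, z2) ≠ ((0:ℝ), (0:ℝ)) := by
            intro hzz
            have hz1 : z1 = 0 := congrArg Prod.fst hzz
            have hz2 : z2 = 0 := congrArg Prod.snd hzz
            subst hz1 hz2
            have : rhoF d ((0:ℝ), (0:ℝ), (0:ℝ), (0:ℝ)) = 1 := hsm.1
            simp [rhoF, Nfn, abs_zero, Real.zero_rpow hp.ne', Real.zero_rpow hq.ne'] at this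
          have := hdiag z1 z2 hz
          have h0 : (0:ℝ) ≤ f (z1, z2, 0, 0) := hsm.2
          linarith
      have hQ0 : 0 ≤ f sM := hsM.2
      refine ⟨(f sM + 1)/(Nfn d sm), by positivity, ?_⟩
      intro s hsSph
      rcases lt_or_ge (f s) 0 with h | h
      · have : 0 ≤ (f sM + 1)/(Nfn d sm) * Nfn d s :=
          mul_nonneg (by positivity) (N_nonneg s)
        linarith
      · have hsT : s ∈ Sph ∩ {s | 0 ≤ f s} := ⟨hsSph, h⟩
        have h1 : f s ≤ f sM := hmaxf hsT
        have h2 : Nfn d sm ≤ Nfn d s := hminN hsT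
        have h4 : (f sM + 1)/(Nfn d sm) * Nfn d sm ≤ (f sM + 1)/(Nfn d sm) * Nfn d s :=
          mul_le_mul_of_nonneg_left h2 (by positivity)
        have h3 : (f sM + 1)/(Nfn d sm) * Nfn d sm = f sM + 1 := div_mul_cancel₀ _ hm.ne'
        linarith
    · refine ⟨1, one_pos, fun s hs => ?_⟩
      have h1 : f s < 0 := by
        by_contra h; push_neg at h; exact hT ⟨s, hs, h⟩
      have := N_nonneg (d := d) s
      linarith
  obtain ⟨v, hv0, hvS⟩ := hsph
  refine ⟨v, hv0, ?_⟩
  intro s hs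
  have hρ := rho_pos hd hs
  set c : ℝ := (rhoF d s) ^ (-(1/2) : ℝ) with hcdef
  have hc : 0 < c := Real.rpow_pos_of_pos hρ _
  have hc2 : c^2 = (rhoF d s)⁻¹ := by
    rw [hcdef, ← Real.rpow_natCast ((rhoF d s) ^ (-(1/2):ℝ)) 2, ← Real.rpow_mul hρ.le]
    norm_num [Real.rpow_neg_one]
  have hdilSph : dil d c s ∈ Sph := by
    simp only [hSphdef, Set.mem_setOf_eq]
    rw [hom_rho hd hc s, hc2, inv_mul_cancel₀ hρ.ne']
  have hstep := hvS _ hdilSph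
  have hfd : f (dil d c s) = c^2 * f s := by
    simp only [hf]
    rw [hom_K0 hd hc, hom_D hd hc]
    ring
  rw [hfd, hom_N hd hc] at hstep
  have hc2p : (0:ℝ) < c^2 := by positivity
  have : c^2 * f s < c^2 * (v * Nfn d s) := by linarith
  have hfin : f s < v * Nfn d s := lt_of_mul_lt_mul_left this hc2p.le
  rw [hf] at hfin
  simpa using hfin

section wit
variable {d β : ℝ} (hd : d ∈ Set.Ioo (-1:ℝ) 1) (hβ : 0 < β)
include hd hβ

lemma K0_s1 (α1 α2 a : ℝ) :
    K0fn d β α1 α2 a (1+β, 1, -(2+β), 0) = 2*a*α1*((1+β)^(1/(1-d)) - 1) + α1^2 := by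
  have h1 : (1+β) + -(2+β) = (-1:ℝ) := by ring
  simp only [K0fn]
  rw [h1, spow_neg_one, spow_neg_one, spow_one_base, spow_of_pos (by linarith : (0:ℝ) < 1+β)]
  ring

lemma N_s1 : Nfn d (1+β, 1, -(2+β), 0) = (2+β)^(2/(1-d)) := by
  have h2 : (0:ℝ) < 2/(1+d) := by
    have : (0:ℝ) < 1 + d := by linarith [hd.1]
    positivity
  simp only [Nfn]
  rw [abs_neg, abs_of_pos (by linarith : (0:ℝ) < 2+β), abs_zero, Real.zero_rpow h2.ne']
  ring

lemma D_s1 (α1 a : ℝ) : Dfn d β α1 a (1+β, 1, -(2+β), 0) = 0 := by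
  simp [Dfn]

lemma K0_se (α1 α2 a ε : ℝ) : K0fn d β α1 α2 a (0, 1, 0, ε) = α1^2 - a*α1 := by
  simp only [K0fn]
  rw [add_zero, spow_zero, spow_zero]
  ring

lemma D_se (α1 a ε : ℝ) : Dfn d β α1 a (0, 1, 0, ε) = a*(1+β)*ε/α1 := by
  simp only [Dfn]
  rw [spow_one_base]
  ring

lemma N_se {ε : ℝ} (hε : 0 < ε) : Nfn d (0, 1, 0, ε) = ε^(2/(1+d)) := by
  have h2 : (0:ℝ) < 2/(1-d) := by
    have : (0:ℝ) < 1 - d := by linarith [hd.2]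
    positivity
  simp only [Nfn]
  rw [abs_zero, Real.zero_rpow h2.ne', abs_of_pos hε]
  ring

end wit

lemma le_of_forall_pos_le_add' {x y : ℝ} (h : ∀ ε > 0, x ≤ y + ε) : x ≤ y := by
  by_contra hc
  push_neg at hc
  have := h ((x - y)/2) (by linarith)
  linarith


noncomputable def phiF (d β α1 α2 a u : ℝ) : ℝ := sInf (Wset d β α1 α2 a u)

/-- Existence of an optimal gain-scaling `L* > 0` that globally minimizes the
homogeneous `L₂`-gain estimate `G(L)`. -/
theorem stmt18 (d β α1 α2 a : ℝ) (hd : d ∈ Set.Ioo (-1:ℝ) 1) (hβ : 0 < β)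
    (hα1 : 0 < α1) (hα2 : 0 < α2) (ha : 0 < a)
    (hSF : ∀ z1 z2 : ℝ, (z1, z2) ≠ ((0:ℝ), (0:ℝ)) →
      α1 ^ 2 * z2 ^ 2 < a * (α1 * muF d z1 z2 - (α2 / α1) * etaF d β z1 z2)) :
    ∃ Ls : ℝ, 0 < Ls ∧ ∀ L > (0:ℝ), Gest d β α1 α2 a Ls ≤ Gest d β α1 α2 a L := by
  have h1d : (0:ℝ) < 1 - d := by linarith [hd.2]
  have h1d' : (0:ℝ) < 1 + d := by linarith [hd.1]
  have hWne : ∀ u : ℝ, 0 < u → (Wset d β α1 α2 a u).Nonempty :=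
    fun u hu => Wset_nonempty hd hβ hα1 hα2 ha hSF hu
  have hWbdd : ∀ u : ℝ, BddBelow (Wset d β α1 α2 a u) :=
    fun u => ⟨0, fun v hv => hv.1.le⟩
  have hWup : ∀ u v v', v ∈ Wset d β α1 α2 a u → v ≤ v' → v' ∈ Wset d β α1 α2 a u := by
    intro u v v' hv hle
    exact ⟨lt_of_lt_of_le hv.1 hle, fun s hs => lt_of_lt_of_le (hv.2 s hs)
      (mul_le_mul_of_nonneg_right hle (N_nonneg s))⟩
  have hφ0 : ∀ u : ℝ, 0 < u → 0 ≤ phiF d β α1 α2 a u :=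
    fun u hu => le_csInf (hWne u hu) (fun v hv => hv.1.le)
  -- pointwise identity
  have key : ∀ (L γ z1 z2 ν δ : ℝ), L ≠ 0 →
      L^2 * Jhat d β α1 α2 a L γ z1 z2 ν δ
        = (L^2 * K0fn d β α1 α2 a (z1,z2,ν,δ) + Dfn d β α1 a (z1,z2,ν,δ))
          - γ^2 * Nfn d (z1,z2,ν,δ) := by
    intro L γ z1 z2 ν δ hL
    simp only [Jhat, K0fn, Dfn, Nfn]
    field_simp
    ring
  have hJiff : ∀ (L γ : ℝ), 0 < L → ∀ z1 z2 ν δ : ℝ,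
      (Jhat d β α1 α2 a L γ z1 z2 ν δ < 0 ↔
       L^2 * K0fn d β α1 α2 a (z1,z2,ν,δ) + Dfn d β α1 a (z1,z2,ν,δ)
         < γ^2 * Nfn d (z1,z2,ν,δ)) := by
    intro L γ hL z1 z2 ν δ
    have hL2 : (0:ℝ) < L^2 := by positivity
    have hk := key L γ z1 z2 ν δ hL.ne'
    constructor
    · intro h
      have h2 : L^2 * Jhat d β α1 α2 a L γ z1 z2 ν δ < 0 := mul_neg_of_pos_of_neg hL2 h
      rw [hk] at h2; linarith
    · intro h
      by_contra hcon
      push_neg at hcon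
      have h2 : 0 ≤ L^2 * Jhat d β α1 α2 a L γ z1 z2 ν δ := mul_nonneg hL2.le hcon
      rw [hk] at h2; linarith
  have hsetEq : ∀ L : ℝ, 0 < L →
      {γ : ℝ | 0 < γ ∧ ∀ z1 z2 ν δ : ℝ,
        (z1, z2, ν, δ) ≠ ((0:ℝ), (0:ℝ), (0:ℝ), (0:ℝ)) →
        Jhat d β α1 α2 a L γ z1 z2 ν δ < 0}
      = {γ : ℝ | 0 < γ ∧ γ^2 ∈ Wset d β α1 α2 a (L^2)} := by
    intro L hL
    ext γ
    simp only [Set.mem_setOf_eq]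
    apply and_congr_right
    intro hγ
    constructor
    · intro h
      refine ⟨by positivity, ?_⟩
      rintro ⟨z1,z2,ν,δ⟩ hs
      have hs' : (z1,z2,ν,δ) ≠ ((0:ℝ),(0:ℝ),(0:ℝ),(0:ℝ)) := by
        simpa [Prod.ext_iff] using hs
      exact (hJiff L γ hL z1 z2 ν δ).mp (h z1 z2 ν δ hs')
    · intro h z1 z2 ν δ hs
      refine (hJiff L γ hL z1 z2 ν δ).mpr (h.2 (z1,z2,ν,δ) ?_)
      simpa [Prod.ext_iff] using hs
  have hsqrt : ∀ u : ℝ, 0 < u →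
      sInf {γ : ℝ | 0 < γ ∧ γ^2 ∈ Wset d β α1 α2 a u} = Real.sqrt (phiF d β α1 α2 a u) := by
    intro u hu
    have hw0 : 0 ≤ phiF d β α1 α2 a u := hφ0 u hu
    have hSne : {γ : ℝ | 0 < γ ∧ γ^2 ∈ Wset d β α1 α2 a u}.Nonempty := by
      obtain ⟨v, hv⟩ := hWne u hu
      exact ⟨Real.sqrt v, Real.sqrt_pos.mpr hv.1, by rwa [Real.sq_sqrt hv.1.le]⟩
    have hSbdd : BddBelow {γ : ℝ | 0 < γ ∧ γ^2 ∈ Wset d β α1 α2 a u} :=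
      ⟨0, fun γ hγ => hγ.1.le⟩
    apply le_antisymm
    · apply le_of_forall_pos_le_add'
      intro ε hε
      have h1 : phiF d β α1 α2 a u < (Real.sqrt (phiF d β α1 α2 a u) + ε)^2 := by
        nlinarith [Real.sq_sqrt hw0, Real.sqrt_nonneg (phiF d β α1 α2 a u)]
      obtain ⟨w, hwW, hww⟩ := exists_lt_of_csInf_lt (hWne u hu) h1
      have hmem : (Real.sqrt (phiF d β α1 α2 a u) + ε)^2 ∈ Wset d β α1 α2 a u :=
        hWup u w _ hwW hww.le
      refine csInf_le hSbdd ⟨?_, hmem⟩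
      have := Real.sqrt_nonneg (phiF d β α1 α2 a u); linarith
    · apply le_csInf hSne
      intro γ hγ
      have h1 : phiF d β α1 α2 a u ≤ γ^2 := csInf_le (hWbdd u) hγ.2
      calc Real.sqrt (phiF d β α1 α2 a u) ≤ Real.sqrt (γ^2) := Real.sqrt_le_sqrt h1
        _ = γ := Real.sqrt_sq hγ.1.le
  have hbridge : ∀ L : ℝ, 0 < L →
      Gest d β α1 α2 a L = Real.sqrt (phiF d β α1 α2 a (L^2)) := by
    intro L hL
    have hL2 : (0:ℝ) < L^2 := by positivity
    rw [Gest, hsetEq L hL, hsqrt _ hL2]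
  -- convexity of phiF on (0, ∞)
  have hconv : ConvexOn ℝ (Set.Ioi (0:ℝ)) (phiF d β α1 α2 a) := by
    refine ⟨convex_Ioi 0, ?_⟩
    intro u1 hu1 u2 hu2 θ1 θ2 hθ1 hθ2 hsum
    simp only [smul_eq_mul]
    have hu1' : (0:ℝ) < u1 := hu1
    have hu2' : (0:ℝ) < u2 := hu2
    have hmem : ∀ v1 ∈ Wset d β α1 α2 a u1, ∀ v2 ∈ Wset d β α1 α2 a u2,
        θ1*v1 + θ2*v2 ∈ Wset d β α1 α2 a (θ1*u1 + θ2*u2) := by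
      intro v1 hv1 v2 hv2
      constructor
      · calc (0:ℝ) < min v1 v2 := lt_min hv1.1 hv2.1
          _ = θ1 * min v1 v2 + θ2 * min v1 v2 := by rw [← add_mul, hsum, one_mul]
          _ ≤ θ1*v1 + θ2*v2 := add_le_add
              (mul_le_mul_of_nonneg_left (min_le_left _ _) hθ1)
              (mul_le_mul_of_nonneg_left (min_le_right _ _) hθ2)
      · intro s hs
        have e1 := hv1.2 s hs
        have e2 := hv2.2 s hs
        have hB : Dfn d β α1 a s = θ1 * Dfn d β α1 a s + θ2 * Dfn d β α1 a s := by
          linear_combination (-(Dfn d β α1 a s)) * hsum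
        rcases lt_or_eq_of_le hθ1 with h1 | h1
        · have m1 := mul_lt_mul_of_pos_left e1 h1
          have m2 := mul_le_mul_of_nonneg_left e2.le hθ2
          nlinarith [m1, m2, hB]
        · have hθ2' : θ2 = 1 := by linarith
          have hθ1' : θ1 = 0 := h1.symm
          rw [hθ1', hθ2']
          simpa using e2
    apply le_of_forall_pos_le_add'
    intro ε hε
    obtain ⟨v1, hv1, hlt1⟩ := exists_lt_of_csInf_lt (hWne u1 hu1')
      (lt_add_of_pos_right _ (by linarith : (0:ℝ) < ε/2))
    obtain ⟨v2, hv2, hlt2⟩ := exists_lt_of_csInf_lt (hWne u2 hu2')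
      (lt_add_of_pos_right _ (by linarith : (0:ℝ) < ε/2))
    have hle := csInf_le (hWbdd _) (hmem v1 hv1 v2 hv2)
    have b1 : θ1*v1 ≤ θ1*(sInf (Wset d β α1 α2 a u1) + ε/2) :=
      mul_le_mul_of_nonneg_left hlt1.le hθ1
    have b2 : θ2*v2 ≤ θ2*(sInf (Wset d β α1 α2 a u2) + ε/2) :=
      mul_le_mul_of_nonneg_left hlt2.le hθ2
    have hsum' : θ1*(ε/2) + θ2*(ε/2) = ε/2 := by linear_combination (ε/2)*hsum
    simp only [phiF]
    nlinarith [hle, b1, b2, hsum']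
  -- witness 1 : large u
  have hp0 : (0:ℝ) < 1/(1-d) := by positivity
  have hK1 : 0 < K0fn d β α1 α2 a (1+β, 1, -(2+β), 0) := by
    rw [K0_s1 hd hβ]
    have h1 : (1:ℝ) < (1+β)^(1/(1-d)) :=
      (Real.one_lt_rpow_iff_of_pos (by linarith)).mpr (Or.inl ⟨by linarith, hp0⟩)
    nlinarith [mul_pos ha hα1]
  have hN1 : 0 < Nfn d (1+β, 1, -(2+β), 0) := by
    rw [N_s1 hd hβ]
    exact Real.rpow_pos_of_pos (by linarith) _
  have hs1ne : ((1+β, 1, -(2+β), 0) : ℝ×ℝ×ℝ×ℝ) ≠ 0 := by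
    intro h
    have := congrArg (fun s : ℝ×ℝ×ℝ×ℝ => s.2.1) h
    norm_num at this
  have hκ : 0 < K0fn d β α1 α2 a (1+β, 1, -(2+β), 0) / Nfn d (1+β, 1, -(2+β), 0) :=
    div_pos hK1 hN1
  have hbig : ∀ u : ℝ, 0 < u → ∀ v ∈ Wset d β α1 α2 a u,
      u * (K0fn d β α1 α2 a (1+β,1,-(2+β),0) / Nfn d (1+β,1,-(2+β),0)) < v := by
    intro u hu v hv
    have h := hv.2 _ hs1ne
    rw [D_s1 hd hβ] at h
    have h2 := (div_lt_iff₀ hN1).mpr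
      (by linarith : u * K0fn d β α1 α2 a (1+β,1,-(2+β),0) < v * Nfn d (1+β,1,-(2+β),0))
    calc u * (K0fn d β α1 α2 a (1+β,1,-(2+β),0) / Nfn d (1+β,1,-(2+β),0))
        = u * K0fn d β α1 α2 a (1+β,1,-(2+β),0) / Nfn d (1+β,1,-(2+β),0) := by ring
      _ < v := h2
  -- witness 2 : small u
  have hA : 0 < a*α1 - α1^2 := by
    have hne : ((0:ℝ),(1:ℝ)) ≠ ((0:ℝ),(0:ℝ)) := by
      intro h; simpa using congrArg Prod.snd h
    have h01 := hSF 0 1 hne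
    have hmu : muF d 0 1 = 1 := by
      simp [muF, spow_zero]
    have heta : etaF d β 0 1 = 0 := by
      have h2 : (0:ℝ) < 2/(1-d) := by positivity
      simp [etaF, spow_zero, Real.zero_rpow h2.ne']
    rw [hmu, heta] at h01
    norm_num at h01
    nlinarith [h01]
  have hM : (0:ℝ) < 2*(a*α1-α1^2)*α1/(a*(1+β)) := by
    apply div_pos (by nlinarith) (by positivity)
  have hsne : ∀ ε : ℝ, ((0:ℝ),(1:ℝ),(0:ℝ),ε) ≠ (0 : ℝ×ℝ×ℝ×ℝ) := by
    intro ε h; simpa using congrArg (fun s : ℝ×ℝ×ℝ×ℝ => s.2.1) h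
  have hsmall : ∀ u : ℝ, 0 < u → ∀ v ∈ Wset d β α1 α2 a u,
      (a*α1-α1^2)*u < v * ((2*(a*α1-α1^2)*α1/(a*(1+β)))*u)^(2/(1+d)) := by
    intro u hu v hv
    have hεp : 0 < (2*(a*α1-α1^2)*α1/(a*(1+β)))*u := mul_pos hM hu
    have h := hv.2 ((0:ℝ),(1:ℝ),(0:ℝ),(2*(a*α1-α1^2)*α1/(a*(1+β)))*u)
      (hsne ((2*(a*α1-α1^2)*α1/(a*(1+β)))*u))
    rw [K0_se hd hβ, D_se hd hβ, N_se hd hβ hεp] at h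
    have hCM : a*(1+β)*((2*(a*α1-α1^2)*α1/(a*(1+β)))*u)/α1 = 2*((a*α1-α1^2)*u) := by
      field_simp
    rw [hCM] at h
    linarith
  have hφbig : ∀ u : ℝ, 0 < u →
      u * (K0fn d β α1 α2 a (1+β,1,-(2+β),0) / Nfn d (1+β,1,-(2+β),0))
        ≤ phiF d β α1 α2 a u :=
    fun u hu => le_csInf (hWne u hu) (fun v hv => (hbig u hu v hv).le)
  have hφsmall : ∀ u : ℝ, 0 < u →
      (a*α1-α1^2)*u / ((2*(a*α1-α1^2)*α1/(a*(1+β)))*u)^(2/(1+d))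
        ≤ phiF d β α1 α2 a u := by
    intro u hu
    apply le_csInf (hWne u hu)
    intro v hv
    exact (div_le_iff₀ (Real.rpow_pos_of_pos (mul_pos hM hu) _)).mpr (hsmall u hu v hv).le
  -- coercivity near 0 via tendsto
  have htend : Filter.Tendsto
      (fun u : ℝ => (a*α1-α1^2)*u / ((2*(a*α1-α1^2)*α1/(a*(1+β)))*u)^(2/(1+d)))
      (nhdsWithin 0 (Set.Ioi 0)) Filter.atTop := by
    have hc : 0 < (a*α1-α1^2) / (2*(a*α1-α1^2)*α1/(a*(1+β)))^(2/(1+d)) :=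
      div_pos (by nlinarith) (Real.rpow_pos_of_pos hM _)
    have h1 : Filter.Tendsto (fun u : ℝ => u⁻¹) (nhdsWithin 0 (Set.Ioi 0)) Filter.atTop :=
      tendsto_inv_nhdsGT_zero
    have h2 : Filter.Tendsto (fun x : ℝ => x^(2/(1+d) - 1)) Filter.atTop Filter.atTop :=
      tendsto_rpow_atTop (by
        have hr1 : (1:ℝ) < 2/(1+d) := by rw [lt_div_iff₀ h1d']; linarith
        linarith)
    have h3 := (h2.comp h1).const_mul_atTop hc
    apply h3.congr'
    filter_upwards [self_mem_nhdsWithin] with u hu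
    have hu' : (0:ℝ) < u := hu
    have e1 : ((u⁻¹)^(2/(1+d)-1) : ℝ) = u / u^(2/(1+d)) := by
      rw [Real.inv_rpow hu'.le, ← Real.rpow_neg hu'.le,
        show -(2/(1+d)-1) = 1 - 2/(1+d) by ring, Real.rpow_sub hu', Real.rpow_one]
    simp only [Function.comp]
    rw [Real.mul_rpow hM.le hu'.le, e1, div_mul_div_comm]
  -- extract a small threshold
  have hev : ∀ᶠ u in nhdsWithin 0 (Set.Ioi 0),
      phiF d β α1 α2 a 1 + 1 ≤
        (a*α1-α1^2)*u / ((2*(a*α1-α1^2)*α1/(a*(1+β)))*u)^(2/(1+d)) :=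
    htend.eventually_ge_atTop _
  obtain ⟨a0, ha0, hsub⟩ := mem_nhdsGT_iff_exists_Ioc_subset.mp hev
  have ha0' : (0:ℝ) < a0 := ha0
  -- compact interval
  set B := phiF d β α1 α2 a 1 with hBdef
  set κ := K0fn d β α1 α2 a (1+β,1,-(2+β),0) / Nfn d (1+β,1,-(2+β),0) with hκdef
  set lo := min a0 1 with hlodef
  set hi := max ((B+1)/κ) 1 with hhidef
  have hlo : (0:ℝ) < lo := lt_min ha0' one_pos
  have hlo1 : lo ≤ 1 := min_le_right _ _
  have h1hi : (1:ℝ) ≤ hi := le_max_right _ _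
  have hout : ∀ u : ℝ, 0 < u → u ∉ Set.Icc lo hi → B + 1 ≤ phiF d β α1 α2 a u := by
    intro u hu hnot
    rw [Set.mem_Icc, not_and_or] at hnot
    rcases hnot with h | h
    · push_neg at h
      have hmem0 : u ∈ Set.Ioc 0 a0 := ⟨hu, (lt_of_lt_of_le h (min_le_left _ _)).le⟩
      exact le_trans (hsub hmem0) (hφsmall u hu)
    · push_neg at h
      have h2 : (B+1)/κ ≤ hi := le_max_left _ _
      have h3 : B+1 ≤ u*κ := by
        rw [← div_le_iff₀ hκ]
        linarith
      exact le_trans h3 (hφbig u hu)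
  have hIoi : Set.Icc lo hi ⊆ Set.Ioi (0:ℝ) := fun u hu => lt_of_lt_of_le hlo hu.1
  have hcont : ContinuousOn (phiF d β α1 α2 a) (Set.Icc lo hi) :=
    (hconv.continuousOn isOpen_Ioi).mono hIoi
  obtain ⟨us, husmem, husmin⟩ :=
    isCompact_Icc.exists_isMinOn ⟨1, hlo1, h1hi⟩ hcont
  have huspos : 0 < us := lt_of_lt_of_le hlo husmem.1
  have hglob : ∀ u : ℝ, 0 < u → phiF d β α1 α2 a us ≤ phiF d β α1 α2 a u := by
    intro u hu
    by_cases hmem2 : u ∈ Set.Icc lo hi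
    · exact husmin hmem2
    · have hmB : phiF d β α1 α2 a us ≤ B := husmin ⟨hlo1, h1hi⟩
      have h2 := hout u hu hmem2
      linarith
  refine ⟨Real.sqrt us, Real.sqrt_pos.mpr huspos, ?_⟩
  intro L hL
  have h1 : Real.sqrt us ^ 2 = us := Real.sq_sqrt huspos.le
  rw [hbridge _ (Real.sqrt_pos.mpr huspos), hbridge _ hL, h1]
  exact Real.sqrt_le_sqrt (hglob (L^2) (by positivity))
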